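/- Let X₁, …, Xₙ be independent real random variables on a probability space such that 0 ≤ X_t ≤ 2/3 almost surely for each t, and let y = ∑_{t=1}^n E[X_t]. Then E[ max(1 − ∑_{t=1}^n X_t, 0) ] ≤ e^{−3y/2}·(1 + y/2). -/

import Mathlib

open MeasureTheory ProbabilityTheory

/-- pointwise convexity of `z ↦ max (a - z) 0` on `[0, 2/3]`. -/
private lemma ptwise_convex (a v : ℝ) (hv0 : 0 ≤ v) (hv1 : v ≤ 2/3) :
    max (a - v) 0 ≤ (1 - 3/2*v) * max a 0 + (3/2*v) * max (a - 2/3) 0 := by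
  rcases le_total a 0 with ha | ha
  · rw [max_eq_right (by linarith), max_eq_right (by linarith), max_eq_right (by linarith)]
    norm_num
  rcases le_total a (2/3) with ha2 | ha2
  · rw [max_eq_left ha, max_eq_right (show a - 2/3 ≤ (0:ℝ) by linarith)]
    rcases le_total (a - v) 0 with h | h
    · rw [max_eq_right h]; nlinarith
    · rw [max_eq_left h]; nlinarith
  · rw [max_eq_left (show (0:ℝ) ≤ a - v by linarith), max_eq_left ha,
      max_eq_left (show (0:ℝ) ≤ a - 2/3 by linarith)]
    nlinarith

private lemma cube_le_exp (q : ℝ) (hq0 : 0 ≤ q) (hq1 : q ≤ 1) :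
    (1 - q/3)^3 ≤ Real.exp (-q) := by
  have h3 : (0:ℝ) ≤ 1 - q/3 := by linarith
  have hb : 1 - q/3 ≤ Real.exp (-(q/3)) := by
    have := Real.add_one_le_exp (-(q/3)); linarith
  calc (1-q/3)^3 ≤ Real.exp (-(q/3))^3 := pow_le_pow_left₀ h3 hb 3
    _ = Real.exp (-q) := by
        rw [pow_succ, pow_succ, pow_one, ← Real.exp_add, ← Real.exp_add]; ring_nf

private lemma exp_step_b (q P : ℝ) (hq0 : 0 ≤ q) (hq1 : q ≤ 1) :
    (1 - q) * (Real.exp (-P) / 3) ≤ Real.exp (-(P + q)) / 3 := by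
  have he : Real.exp (-(P+q)) = Real.exp (-P) * Real.exp (-q) := by
    rw [← Real.exp_add]; ring_nf
  have h1 : 1 - q ≤ Real.exp (-q) := by have := Real.add_one_le_exp (-q); linarith
  have hp : (0:ℝ) < Real.exp (-P) := Real.exp_pos _
  rw [he]; nlinarith

private lemma exp_step_a (q P : ℝ) (hq0 : 0 ≤ q) (hq1 : q ≤ 1) (hP : 0 ≤ P) :
    (1 - q) * (Real.exp (-P) * (1 + P/3)) + q * (Real.exp (-P) / 3)
      ≤ Real.exp (-(P + q)) * (1 + (P + q)/3) := by
  have he : Real.exp (-(P+q)) = Real.exp (-P) * Real.exp (-q) := by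
    rw [← Real.exp_add]; ring_nf
  have h1 : 1 - q ≤ Real.exp (-q) := by have := Real.add_one_le_exp (-q); linarith
  have h2 : (1 - q/3)^3 ≤ Real.exp (-q) := cube_le_exp q hq0 hq1
  have hB : 1 - q + q/3 ≤ (1 - q/3)^3 * (1 + q/3) := by
    nlinarith [mul_nonneg (mul_nonneg hq0 hq0) (mul_nonneg hq0 (sub_nonneg.mpr hq1)),
      mul_nonneg (mul_nonneg hq0 hq0) hq0]
  have hq3 : (0:ℝ) ≤ 1 + q/3 := by linarith
  have hC : 1 - q + q/3 ≤ Real.exp (-q) * (1 + q/3) :=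
    hB.trans (mul_le_mul_of_nonneg_right h2 hq3)
  have hD : (1 - q) * (P/3) ≤ Real.exp (-q) * (P/3) :=
    mul_le_mul_of_nonneg_right h1 (by linarith)
  have hp : (0:ℝ) < Real.exp (-P) := Real.exp_pos _
  have key : (1 - q) * (1 + P/3) + q/3 ≤ Real.exp (-q) * (1 + (P + q)/3) := by
    nlinarith
  calc (1 - q) * (Real.exp (-P) * (1 + P/3)) + q * (Real.exp (-P) / 3)
      = Real.exp (-P) * ((1 - q) * (1 + P/3) + q/3) := by ring
    _ ≤ Real.exp (-P) * (Real.exp (-q) * (1 + (P + q)/3)) :=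
        mul_le_mul_of_nonneg_left key hp.le
    _ = Real.exp (-(P+q)) * (1 + (P + q)/3) := by rw [he]; ring

private lemma aux_main {Ω : Type*} [MeasurableSpace Ω] (μ : Measure Ω) [IsProbabilityMeasure μ]
    {n : ℕ} (X : Fin n → Ω → ℝ)
    (hmeas : ∀ t, Measurable (X t))
    (hindep : iIndepFun X μ)
    (hbound : ∀ t, ∀ᵐ ω ∂μ, X t ω ∈ Set.Icc (0 : ℝ) (2/3))
    (s : Finset (Fin n)) :
    (∫ ω, max (1/3 - ∑ t ∈ s, X t ω) 0 ∂μ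
        ≤ Real.exp (-(3/2 * ∑ t ∈ s, ∫ ω, X t ω ∂μ)) / 3) ∧
    (∫ ω, max (1 - ∑ t ∈ s, X t ω) 0 ∂μ
        ≤ Real.exp (-(3/2 * ∑ t ∈ s, ∫ ω, X t ω ∂μ))
          * (1 + (3/2 * ∑ t ∈ s, ∫ ω, X t ω ∂μ) / 3)) := by
  induction s using Finset.cons_induction with
  | empty => simp
  | cons j s hj ih =>
    -- notation
    set S : Ω → ℝ := fun ω => ∑ t ∈ s, X t ω with hSdef
    have hSmeas : Measurable S := Finset.measurable_sum s (fun t _ => hmeas t)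
    have haeb : ∀ᵐ ω ∂μ, ∀ t, X t ω ∈ Set.Icc (0:ℝ) (2/3) := ae_all_iff.mpr hbound
    have hS0 : ∀ᵐ ω ∂μ, 0 ≤ S ω :=
      haeb.mono fun ω h => Finset.sum_nonneg fun t _ => (h t).1
    have hVb := hbound j
    have hXint : Integrable (X j) μ := by
      refine (integrable_const (2/3 : ℝ)).mono' (hmeas j).aestronglyMeasurable ?_
      exact hVb.mono fun ω h => by
        rw [Real.norm_eq_abs, abs_le]; exact ⟨by linarith [h.1], h.2⟩
    have hq'0 : 0 ≤ ∫ ω, X j ω ∂μ := integral_nonneg_of_ae (hVb.mono fun ω h => h.1)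
    have hq'1 : ∫ ω, X j ω ∂μ ≤ 2/3 := by
      have h := integral_mono_ae hXint (integrable_const (2/3:ℝ))
        (hVb.mono fun ω h => h.2)
      simpa using h
    have hind : IndepFun S (X j) μ := by
      have h := hindep.indepFun_finsetSum_of_notMem hmeas hj
      have he : (∑ t ∈ s, X t) = S := by funext ω; simp [hSdef]
      rwa [he] at h
    -- generic facts for φ_c
    have hφm : ∀ c : ℝ, Measurable (fun z : ℝ => max (c - z) 0) := fun c =>
      (measurable_const.sub measurable_id).max measurable_const
    have hgm : ∀ c : ℝ, Measurable (fun ω => max (c - S ω) 0) := fun c =>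
      (hφm c).comp hSmeas
    have habs : ∀ c : ℝ, c ≤ 1 → ∀ ω, 0 ≤ S ω → |max (c - S ω) 0| ≤ 1 := by
      intro c hc ω h
      rw [abs_le]
      constructor
      · linarith [le_max_right (c - S ω) (0:ℝ)]
      · rcases max_cases (c - S ω) (0:ℝ) with ⟨he, _⟩ | ⟨he, _⟩ <;> rw [he] <;> linarith
    have hgint : ∀ c : ℝ, c ≤ 1 → Integrable (fun ω => max (c - S ω) 0) μ := by
      intro c hc
      refine (integrable_const (1:ℝ)).mono' (hgm c).aestronglyMeasurable ?_
      filter_upwards [hS0] with ω h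
      rw [Real.norm_eq_abs]; exact habs c hc ω h
    have hpint : ∀ c : ℝ, c ≤ 1 → Integrable (fun ω => X j ω * max (c - S ω) 0) μ := by
      intro c hc
      refine (integrable_const (1:ℝ)).mono'
        ((hmeas j).mul (hgm c)).aestronglyMeasurable ?_
      filter_upwards [hS0, hVb] with ω h hv
      rw [Real.norm_eq_abs, abs_mul]
      have h1 : |X j ω| ≤ 2/3 := abs_le.mpr ⟨by linarith [hv.1], hv.2⟩
      calc |X j ω| * |max (c - S ω) 0| ≤ (2/3) * 1 :=
            mul_le_mul h1 (habs c hc ω h) (abs_nonneg _) (by norm_num)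
        _ ≤ 1 := by norm_num
    have hmul : ∀ c : ℝ, c ≤ 1 →
        ∫ ω, X j ω * max (c - S ω) 0 ∂μ
          = (∫ ω, X j ω ∂μ) * ∫ ω, max (c - S ω) 0 ∂μ := by
      intro c hc
      have hic : IndepFun (X j) (fun ω => max (c - S ω) 0) μ :=
        hind.symm.comp measurable_id (hφm c)
      have h := IndepFun.integral_mul_eq_mul_integral hic hXint.aestronglyMeasurable
        (hgint c hc).aestronglyMeasurable
      simpa [Pi.mul_apply] using h
    -- abbreviations for the numbers involved
    set q' : ℝ := ∫ ω, X j ω ∂μ with hq'def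
    set A : ℝ := ∫ ω, max (1 - S ω) 0 ∂μ with hAdef
    set B : ℝ := ∫ ω, max (1/3 - S ω) 0 ∂μ with hBdef
    set P : ℝ := 3/2 * ∑ t ∈ s, ∫ ω, X t ω ∂μ with hPdef
    have hP0 : 0 ≤ P := by
      have : ∀ t ∈ s, 0 ≤ ∫ ω, X t ω ∂μ := fun t _ =>
        integral_nonneg_of_ae ((hbound t).mono fun ω h => h.1)
      have := Finset.sum_nonneg this
      rw [hPdef]; positivity
    have hq0 : 0 ≤ 3/2 * q' := by linarith
    have hq1 : 3/2 * q' ≤ 1 := by linarith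
    -- the exponent over `cons j s`
    have hsumc : (3/2 * ∑ t ∈ Finset.cons j s hj, ∫ ω, X t ω ∂μ) = P + 3/2 * q' := by
      rw [Finset.sum_cons, hPdef, hq'def]; ring
    -- part (a): the 1/3 bound
    have hstepa : ∫ ω, max (1/3 - ∑ t ∈ Finset.cons j s hj, X t ω) 0 ∂μ
        ≤ (1 - 3/2 * q') * B := by
      have hmono : ∫ ω, max (1/3 - ∑ t ∈ Finset.cons j s hj, X t ω) 0 ∂μ
          ≤ ∫ ω, (max (1/3 - S ω) 0 - 3/2 * (X j ω * max (1/3 - S ω) 0)) ∂μ := by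
        refine integral_mono_ae ?_ ?_ ?_
        · refine (integrable_const (1:ℝ)).mono'
            ((hφm (1/3)).comp (Finset.measurable_sum _ (fun t _ => hmeas t))).aestronglyMeasurable ?_
          filter_upwards [haeb] with ω h
          have h0 : 0 ≤ ∑ t ∈ Finset.cons j s hj, X t ω :=
            Finset.sum_nonneg fun t _ => (h t).1
          rw [Real.norm_eq_abs, abs_le]
          constructor
          · linarith [le_max_right (1/3 - ∑ t ∈ Finset.cons j s hj, X t ω) (0:ℝ)]
          · rcases max_cases (1/3 - ∑ t ∈ Finset.cons j s hj, X t ω) (0:ℝ) with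
              ⟨he, _⟩ | ⟨he, _⟩ <;> rw [he] <;> linarith
        · exact (hgint (1/3) (by norm_num)).sub ((hpint (1/3) (by norm_num)).const_mul _)
        · filter_upwards [hS0, hVb] with ω hs hv
          have h := ptwise_convex (1/3 - S ω) (X j ω) hv.1 hv.2
          have hz : max (1/3 - S ω - 2/3) 0 = 0 := max_eq_right (by linarith)
          rw [hz] at h
          have he : 1/3 - ∑ t ∈ Finset.cons j s hj, X t ω = 1/3 - S ω - X j ω := by
            rw [Finset.sum_cons, hSdef]; ring
          rw [he]
          calc max (1/3 - S ω - X j ω) 0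
              ≤ (1 - 3/2 * X j ω) * max (1/3 - S ω) 0 + (3/2 * X j ω) * 0 := h
            _ = max (1/3 - S ω) 0 - 3/2 * (X j ω * max (1/3 - S ω) 0) := by ring
      have hi2 : Integrable (fun ω => 3/2 * (X j ω * max (1/3 - S ω) 0)) μ := by
        exact (hpint (1/3) (by norm_num)).const_mul _
      have hcalc : ∫ ω, (max (1/3 - S ω) 0 - 3/2 * (X j ω * max (1/3 - S ω) 0)) ∂μ
          = (1 - 3/2 * q') * B := by
        rw [integral_sub (hgint (1/3) (by norm_num)) hi2,
          integral_const_mul, hmul (1/3) (by norm_num)]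
        rw [hBdef]; ring
      linarith [hmono, hcalc.le, hcalc.ge]
    -- part (b): the main bound
    have hstepb : ∫ ω, max (1 - ∑ t ∈ Finset.cons j s hj, X t ω) 0 ∂μ
        ≤ (1 - 3/2 * q') * A + (3/2 * q') * B := by
      have hmono : ∫ ω, max (1 - ∑ t ∈ Finset.cons j s hj, X t ω) 0 ∂μ
          ≤ ∫ ω, (max (1 - S ω) 0 - 3/2 * (X j ω * max (1 - S ω) 0)
              + 3/2 * (X j ω * max (1/3 - S ω) 0)) ∂μ := by
        refine integral_mono_ae ?_ ?_ ?_
        · refine (integrable_const (1:ℝ)).mono'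
            ((hφm 1).comp (Finset.measurable_sum _ (fun t _ => hmeas t))).aestronglyMeasurable ?_
          filter_upwards [haeb] with ω h
          have h0 : 0 ≤ ∑ t ∈ Finset.cons j s hj, X t ω :=
            Finset.sum_nonneg fun t _ => (h t).1
          rw [Real.norm_eq_abs, abs_le]
          constructor
          · linarith [le_max_right (1 - ∑ t ∈ Finset.cons j s hj, X t ω) (0:ℝ)]
          · rcases max_cases (1 - ∑ t ∈ Finset.cons j s hj, X t ω) (0:ℝ) with
              ⟨he, _⟩ | ⟨he, _⟩ <;> rw [he] <;> linarith
        · exact ((hgint 1 le_rfl).sub ((hpint 1 le_rfl).const_mul _)).add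
            ((hpint (1/3) (by norm_num)).const_mul _)
        · filter_upwards [hS0, hVb] with ω hs hv
          have h := ptwise_convex (1 - S ω) (X j ω) hv.1 hv.2
          have hz : 1 - S ω - 2/3 = 1/3 - S ω := by ring
          rw [hz] at h
          have he : 1 - ∑ t ∈ Finset.cons j s hj, X t ω = 1 - S ω - X j ω := by
            rw [Finset.sum_cons, hSdef]; ring
          rw [he]
          calc max (1 - S ω - X j ω) 0
              ≤ (1 - 3/2 * X j ω) * max (1 - S ω) 0
                + (3/2 * X j ω) * max (1/3 - S ω) 0 := h
            _ = max (1 - S ω) 0 - 3/2 * (X j ω * max (1 - S ω) 0)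
                + 3/2 * (X j ω * max (1/3 - S ω) 0) := by ring
      have hcalc : ∫ ω, (max (1 - S ω) 0 - 3/2 * (X j ω * max (1 - S ω) 0)
              + 3/2 * (X j ω * max (1/3 - S ω) 0)) ∂μ
          = (1 - 3/2 * q') * A + (3/2 * q') * B := by
        have hj1 : Integrable (fun ω => 3/2 * (X j ω * max (1 - S ω) 0)) μ := by
          exact (hpint 1 le_rfl).const_mul _
        have hj2 : Integrable (fun ω => 3/2 * (X j ω * max (1/3 - S ω) 0)) μ := by
          exact (hpint (1/3) (by norm_num)).const_mul _
        have hj3 : Integrable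
            (fun ω => max (1 - S ω) 0 - 3/2 * (X j ω * max (1 - S ω) 0)) μ := by
          exact (hgint 1 le_rfl).sub hj1
        rw [integral_add hj3 hj2, integral_sub (hgint 1 le_rfl) hj1,
          integral_const_mul, integral_const_mul, hmul 1 le_rfl, hmul (1/3) (by norm_num)]
        rw [hAdef, hBdef]; ring
      linarith [hmono, hcalc.le, hcalc.ge]
    constructor
    · rw [hsumc]
      calc ∫ ω, max (1/3 - ∑ t ∈ Finset.cons j s hj, X t ω) 0 ∂μ
          ≤ (1 - 3/2 * q') * B := hstepa
        _ ≤ (1 - 3/2 * q') * (Real.exp (-P) / 3) :=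
            mul_le_mul_of_nonneg_left ih.1 (by linarith)
        _ ≤ Real.exp (-(P + 3/2 * q')) / 3 := exp_step_b _ _ hq0 hq1
    · rw [hsumc]
      calc ∫ ω, max (1 - ∑ t ∈ Finset.cons j s hj, X t ω) 0 ∂μ
          ≤ (1 - 3/2 * q') * A + (3/2 * q') * B := hstepb
        _ ≤ (1 - 3/2 * q') * (Real.exp (-P) * (1 + P/3))
            + (3/2 * q') * (Real.exp (-P) / 3) :=
            add_le_add (mul_le_mul_of_nonneg_left ih.2 (by linarith))
              (mul_le_mul_of_nonneg_left ih.1 hq0)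
        _ ≤ Real.exp (-(P + 3/2 * q')) * (1 + (P + 3/2 * q')/3) :=
            exp_step_a _ _ hq0 hq1 hP0

/-- Probabilistic core of Lemma 5.10: for independent [0,2/3]-valued random
variables with total mean y, E[(1 − ∑ Xₜ)⁺] ≤ e^{−3y/2}(1 + y/2). -/
theorem expected_unused_budget_small_bids
    {Ω : Type*} [MeasurableSpace Ω] (μ : Measure Ω) [IsProbabilityMeasure μ]
    (n : ℕ) (X : Fin n → Ω → ℝ)
    (hmeas : ∀ t, Measurable (X t))
    (hindep : iIndepFun X μ)
    (hbound : ∀ t, ∀ᵐ ω ∂μ, X t ω ∈ Set.Icc (0 : ℝ) (2/3))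
    (y : ℝ) (hy : y = ∑ t, ∫ ω, X t ω ∂μ) :
    ∫ ω, max (1 - ∑ t, X t ω) 0 ∂μ ≤ Real.exp (-3 * y / 2) * (1 + y / 2) := by
  have h := (aux_main μ X hmeas hindep hbound Finset.univ).2
  rw [← hy] at h
  calc ∫ ω, max (1 - ∑ t, X t ω) 0 ∂μ
      ≤ Real.exp (-(3/2 * y)) * (1 + (3/2 * y) / 3) := h
    _ = Real.exp (-3 * y / 2) * (1 + y / 2) := by
        rw [show -(3/2 * y) = -3 * y / 2 by ring]; ring
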